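/- Let A be an abelian category and B a Serre subcategory such that the pair (A, B) satisfies the lifting property. Then for all objects X, Y of A, the natural map from the direct limit of Hom_A(X, Y/Y') (over subobjects Y' ⊂ Y with Y' ∈ B) to Hom_{A/B}(X, Y) is an isomorphism. -/

import Mathlib

open CategoryTheory CategoryTheory.Limits ZeroObject

universe w v u v₂ u₂ v₃ u₃ v₄ u₄

namespace Paper

/-- An object is artinian if every descending chain of subobjects is stationary. -/
def IsArtinianObj {A : Type u} [Category.{v} A] (X : A) : Prop :=
  ∀ f : ℕ → Subobject X, (∀ n, f (n + 1) ≤ f n) → ∃ N, ∀ n, N ≤ n → f n = f N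

/-- An abelian category is artinian if every object is artinian. -/
def IsArtinianCat (A : Type u) [Category.{v} A] : Prop :=
  ∀ X : A, IsArtinianObj X

/-- A Serre subcategory, given as a property of objects: closed under isomorphisms,
subobjects, quotients and extensions, and containing a zero object. -/
structure IsSerreSub {A : Type u} [Category.{v} A] [Abelian A] (P : A → Prop) : Prop where
  zero : P 0
  of_iso : ∀ {X Y : A}, (X ≅ Y) → P X → P Y
  of_mono : ∀ {X Y : A} (f : X ⟶ Y), Mono f → P Y → P X
  of_epi : ∀ {X Y : A} (f : X ⟶ Y), Epi f → P X → P Y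
  of_extension : ∀ (S : ShortComplex A), S.ShortExact → P S.X₁ → P S.X₃ → P S.X₂

/-- The left orthogonal `⊥B` of a class of objects: objects admitting no nonzero
morphism to any object of `B`. -/
def perp {A : Type u} [Category.{v} A] [Abelian A] (P : A → Prop) (X : A) : Prop :=
  ∀ (Y : A), P Y → ∀ f : X ⟶ Y, f = 0

/-- The pair `(A, B)` satisfies the lifting property if every epimorphism onto an object
of `B` admits a restriction to a subobject lying in `B` which is still an epimorphism. -/
def LiftingProperty {A : Type u} [Category.{v} A] [Abelian A] (P : A → Prop) : Prop :=
  ∀ {X Y : A} (f : X ⟶ Y), Epi f → P Y →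
    ∃ (X' : A) (ι : X' ⟶ X), Mono ι ∧ P X' ∧ Epi (ι ≫ f)

/-- The class of morphisms whose kernel and cokernel both lie in `P`; the Gabriel quotient
`A/P` is the localization of `A` at this class of morphisms. -/
def serreW {A : Type u} [Category.{v} A] [Abelian A] (P : A → Prop) : MorphismProperty A :=
  fun _ _ f => P (kernel f) ∧ P (cokernel f)

/-- The homological dimension of an abelian category, as an element of `ℕ∞`:
the smallest `n` such that `Ext^i(X,Y) = 0` for all objects `X`, `Y` and all `i > n`
(and `∞` if there is no such `n`). -/
noncomputable def homDim (A : Type u) [Category.{v} A] [Abelian A] : ℕ∞ :=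
  letI : HasDerivedCategory A := HasDerivedCategory.standard A
  haveI : HasExt.{max u v} A := hasExt_of_hasDerivedCategory A
  sInf {n : ℕ∞ | ∀ (X Y : A) (i : ℕ), n < (i : ℕ∞) → Subsingleton (Abelian.Ext X Y i)}

/-- `n` is an `S`-number: a positive integer all of whose prime factors lie in `S`. -/
def IsSNumber (S : Set ℕ) (n : ℕ) : Prop :=
  0 < n ∧ ∀ p : ℕ, p.Prime → p ∣ n → p ∈ S

/-- An object is `S`-primary torsion if it is killed by some `S`-number. -/
def STorsionObj (S : Set ℕ) {A : Type u} [Category.{v} A] [Preadditive A] (X : A) : Prop :=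
  ∃ n : ℕ, IsSNumber S n ∧ n • (𝟙 X) = 0

/-- The canonical morphism `Y/Y₁ ⟶ Y/Y₂` for subobjects `Y₁ ≤ Y₂` of `Y`. -/
noncomputable def quotMap {A : Type u} [Category.{v} A] [Abelian A] {Y : A}
    {Y₁ Y₂ : Subobject Y} (h : Y₁ ≤ Y₂) :
    cokernel Y₁.arrow ⟶ cokernel Y₂.arrow :=
  cokernel.desc _ (cokernel.π _)
    (by rw [← Subobject.ofLE_arrow h, Category.assoc, cokernel.condition, comp_zero])

end Paper
namespace Paper

open CategoryTheory CategoryTheory.Limits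

section Aux
variable {A : Type u} [Category.{v} A] [Abelian A] {B : A → Prop} (hB : IsSerreSub B)
include hB

lemma bOfIsZero {Z : A} (hZ : IsZero Z) : B Z := hB.of_iso hZ.isoZero.symm hB.zero

lemma bKernelOfMono {X Y : A} (f : X ⟶ Y) [Mono f] : B (kernel f) := by
  refine bOfIsZero hB ?_
  rw [IsZero.iff_id_eq_zero, ← cancel_mono (kernel.ι f), Category.id_comp, zero_comp,
    ← cancel_mono f, zero_comp, kernel.condition]

lemma bCokernelOfEpi {X Y : A} (f : X ⟶ Y) [Epi f] : B (cokernel f) := by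
  refine bOfIsZero hB ?_
  rw [IsZero.iff_id_eq_zero, ← cancel_epi (cokernel.π f), Category.comp_id, comp_zero,
    ← cancel_epi f, comp_zero, cokernel.condition]

/-- extension: mono with source and cokernel in `B`. -/
lemma bOfMonoCoker {U V : A} (m : U ⟶ V) [Mono m] (hU : B U) (hc : B (cokernel m)) : B V :=
  hB.of_extension (ShortComplex.mk m (cokernel.π m) (cokernel.condition m))
    (ShortComplex.ShortExact.mk' (ShortComplex.exact_cokernel m) inferInstance
      inferInstance) hU hc

lemma bOfKernelEpi {U V : A} (e : U ⟶ V) [Epi e] (hV : B V) (hk : B (kernel e)) : B U :=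
  hB.of_extension (ShortComplex.mk (kernel.ι e) e (kernel.condition e))
    (ShortComplex.ShortExact.mk' (ShortComplex.exact_kernel e) inferInstance
      inferInstance) hk hV

/-- image of any morphism out of an object of `B` is in `B`. -/
lemma bImage {U V : A} (w : U ⟶ V) (hU : B U) : B (Abelian.image w) :=
  hB.of_iso (Abelian.coimageIsoImage w)
    (hB.of_epi (cokernel.π (kernel.ι w)) inferInstance hU)

end Aux

section Frac
variable {A : Type u} [Category.{v} A] [Abelian A] {B : A → Prop} (hB : IsSerreSub B)
include hB


open CategoryTheory.Abelian.Pseudoelement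
open scoped Pseudoelement

lemma serreW_comp {X Y Z : A} (f : X ⟶ Y) (g : Y ⟶ Z)
    (hf : serreW B f) (hg : serreW B g) : serreW B (f ≫ g) := by
  constructor
  · -- kernel of the composition
    set u : kernel (f ≫ g) ⟶ kernel g :=
      kernel.lift g (kernel.ι (f ≫ g) ≫ f) (by rw [Category.assoc, kernel.condition]) with hu
    have huι : u ≫ kernel.ι g = kernel.ι (f ≫ g) ≫ f := kernel.lift_ι ..
    have hl : B (kernel u) := by
      have h0 : (kernel.ι u ≫ kernel.ι (f ≫ g)) ≫ f = 0 := by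
        rw [Category.assoc, ← huι, ← Category.assoc, kernel.condition, zero_comp]
      set l : kernel u ⟶ kernel f := kernel.lift f _ h0 with hldef
      have hlι : l ≫ kernel.ι f = kernel.ι u ≫ kernel.ι (f ≫ g) := kernel.lift_ι ..
      have : Mono (l ≫ kernel.ι f) := by rw [hlι]; infer_instance
      have : Mono l := mono_of_mono l (kernel.ι f)
      exact hB.of_mono l this hf.1
    have hc : B (cokernel (kernel.ι u)) := by
      have h1 : B (Abelian.image u) := hB.of_mono (kernel.ι (cokernel.π u)) inferInstance hg.1
      exact hB.of_iso (Abelian.coimageIsoImage u).symm h1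
    exact bOfMonoCoker hB (kernel.ι u) hl hc
  · -- cokernel of the composition
    set v : cokernel f ⟶ cokernel (f ≫ g) :=
      cokernel.desc f (g ≫ cokernel.π (f ≫ g))
        (by rw [← Category.assoc, cokernel.condition]) with hv
    have hvπ : cokernel.π f ≫ v = g ≫ cokernel.π (f ≫ g) := cokernel.π_desc ..
    have hcv : B (cokernel v) := by
      have h1 : g ≫ (cokernel.π (f ≫ g) ≫ cokernel.π (g ≫ cokernel.π (f ≫ g))) = 0 := by
        rw [← Category.assoc]; exact cokernel.condition _
      set φ : cokernel g ⟶ cokernel (g ≫ cokernel.π (f ≫ g)) := cokernel.desc g _ h1 with hφ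
      have hφπ : cokernel.π g ≫ φ =
          cokernel.π (f ≫ g) ≫ cokernel.π (g ≫ cokernel.π (f ≫ g)) := cokernel.π_desc ..
      have e1 : Epi (cokernel.π g ≫ φ) := by rw [hφπ]; exact epi_comp _ _
      have e2 : Epi φ := epi_of_epi (cokernel.π g) φ
      have h2 : B (cokernel (g ≫ cokernel.π (f ≫ g))) := hB.of_epi φ e2 hg.2
      exact hB.of_iso ((cokernelIsoOfEq hvπ.symm) ≪≫ cokernelEpiComp (cokernel.π f) v) h2
    have hkv : B (kernel v) := by
      have h0 : (kernel.ι g ≫ cokernel.π f) ≫ v = 0 := by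
        rw [Category.assoc, hvπ, ← Category.assoc, kernel.condition, zero_comp]
      set l : kernel g ⟶ kernel v := kernel.lift v _ h0 with hldef
      have hlι : l ≫ kernel.ι v = kernel.ι g ≫ cokernel.π f := kernel.lift_ι ..
      have he : Epi l := by
        apply epi_of_pseudo_surjective
        intro z
        obtain ⟨y, hy⟩ := pseudo_surjective_of_epi (cokernel.π f) (kernel.ι v z)
        have h2 : cokernel.π (f ≫ g) (g y) = 0 := by
          rw [← Abelian.Pseudoelement.comp_apply, ← hvπ, Abelian.Pseudoelement.comp_apply, hy, ← Abelian.Pseudoelement.comp_apply, kernel.condition, Abelian.Pseudoelement.zero_apply]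
        obtain ⟨x, hx⟩ := pseudo_exact_of_exact (ShortComplex.exact_cokernel (f ≫ g)) _ h2
        have hx' : g y = g (f x) := by rw [← Abelian.Pseudoelement.comp_apply]; exact hx.symm
        obtain ⟨z', hz'0, hz'⟩ := sub_of_eq_image g y (f x) hx'
        have h3 : cokernel.π f (f x) = 0 := by
          rw [← Abelian.Pseudoelement.comp_apply, cokernel.condition, Abelian.Pseudoelement.zero_apply]
        have h4 : cokernel.π f z' = kernel.ι v z := by
          rw [hz' _ _ h3, hy]
        obtain ⟨w, hw⟩ := pseudo_exact_of_exact (ShortComplex.exact_kernel g) z' hz'0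
        refine ⟨w, pseudo_injective_of_mono (kernel.ι v) ?_⟩
        rw [← Abelian.Pseudoelement.comp_apply, hlι, Abelian.Pseudoelement.comp_apply, hw, h4]
      exact hB.of_epi l he hg.1
    have him : B (Abelian.image v) := bImage hB v hf.2
    have hcm : B (cokernel (Abelian.image.ι v)) := by
      have fac : (Abelian.coimage.π v ≫ Abelian.coimageImageComparison v) ≫
          Abelian.image.ι v = v := by
        rw [Category.assoc]; exact Abelian.coimage_image_factorisation v
      have : Epi (Abelian.coimage.π v ≫ Abelian.coimageImageComparison v) := epi_comp _ _
      exact hB.of_iso ((cokernelIsoOfEq fac.symm) ≪≫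
        cokernelEpiComp (Abelian.coimage.π v ≫ Abelian.coimageImageComparison v)
          (Abelian.image.ι v)) hcv
    exact bOfMonoCoker hB (Abelian.image.ι v) him hcm


omit hB in
lemma pseudoApply_id {P : A} (a : Abelian.Pseudoelement P) :
    Abelian.Pseudoelement.pseudoApply (𝟙 P) a = a := by
  exact Quotient.inductionOn a fun b =>
    Quot.sound ⟨b.1, 𝟙 b.1, 𝟙 b.1, by exact (inferInstance : Epi (𝟙 b.1)),
      by exact (inferInstance : Epi (𝟙 b.1)), by
      show 𝟙 b.left ≫ b.hom ≫ 𝟙 P = 𝟙 b.left ≫ b.hom; simp⟩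

lemma serreW_ore {X' X Y : A} (s : X' ⟶ X) (hs : serreW B s) (f : X' ⟶ Y) :
    ∃ (P : A) (f' : X ⟶ P) (s' : Y ⟶ P), serreW B s' ∧ f ≫ s' = s ≫ f' := by
  set d : X' ⟶ X ⊞ Y := biprod.lift s f with hd
  set inl : X ⟶ cokernel d := -(biprod.inl ≫ cokernel.π d) with hinl
  set inr : Y ⟶ cokernel d := biprod.inr ≫ cokernel.π d with hinr
  have hdfst : d ≫ biprod.fst = s := by rw [hd, biprod.lift_fst]
  have hdsnd : d ≫ biprod.snd = f := by rw [hd, biprod.lift_snd]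
  have hsq : f ≫ inr = s ≫ inl := by
    have h : s ≫ biprod.inl ≫ cokernel.π d + f ≫ biprod.inr ≫ cokernel.π d = 0 := by
      rw [← Category.assoc, ← Category.assoc, ← Preadditive.add_comp, ← biprod.lift_eq, ← hd]
      exact cokernel.condition d
    rw [hinl, Preadditive.comp_neg, hinr]
    exact eq_neg_of_add_eq_zero_right h
  refine ⟨cokernel d, inl, inr, ⟨?_, ?_⟩, hsq⟩
  · -- kernel of inr
    have h0 : (kernel.ι s ≫ f) ≫ inr = 0 := by
      rw [Category.assoc, hsq, ← Category.assoc, kernel.condition, zero_comp]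
    set l : kernel s ⟶ kernel inr := kernel.lift inr _ h0 with hldef
    have hlι : l ≫ kernel.ι inr = kernel.ι s ≫ f := kernel.lift_ι ..
    have he : Epi l := by
      apply epi_of_pseudo_surjective
      intro z
      have h1 : Abelian.Pseudoelement.pseudoApply (cokernel.π d)
          (Abelian.Pseudoelement.pseudoApply biprod.inr
            (Abelian.Pseudoelement.pseudoApply (kernel.ι inr) z)) = 0 := by
        rw [← Abelian.Pseudoelement.comp_apply, ← hinr, ← Abelian.Pseudoelement.comp_apply,
          kernel.condition, Abelian.Pseudoelement.zero_apply]
      obtain ⟨x, hx⟩ := pseudo_exact_of_exact (ShortComplex.exact_cokernel d) _ h1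
      have hsx : Abelian.Pseudoelement.pseudoApply s x = 0 := by
        rw [← hdfst, Abelian.Pseudoelement.comp_apply, hx, ← Abelian.Pseudoelement.comp_apply,
          biprod.inr_fst, Abelian.Pseudoelement.zero_apply]
      obtain ⟨w, hw⟩ := pseudo_exact_of_exact (ShortComplex.exact_kernel s) x hsx
      refine ⟨w, pseudo_injective_of_mono (kernel.ι inr) ?_⟩
      rw [← Abelian.Pseudoelement.comp_apply, hlι, Abelian.Pseudoelement.comp_apply, hw,
        ← hdsnd, Abelian.Pseudoelement.comp_apply, hx, ← Abelian.Pseudoelement.comp_apply,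
        biprod.inr_snd, pseudoApply_id]
    exact hB.of_epi l he hs.1
  · -- cokernel of inr
    have h0 : s ≫ inl ≫ cokernel.π inr = 0 := by
      rw [← Category.assoc, ← hsq, Category.assoc, cokernel.condition, comp_zero]
    set β : cokernel s ⟶ cokernel inr := cokernel.desc s _ h0 with hβ
    have hβπ : cokernel.π s ≫ β = inl ≫ cokernel.π inr := cokernel.π_desc ..
    have hepi0 : Epi (inl ≫ cokernel.π inr) := by
      apply Preadditive.epi_of_cancel_zero
      intro U u hu
      rw [hinl] at hu
      simp only [Preadditive.neg_comp, neg_eq_zero, Category.assoc] at hu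
      have h2 : biprod.inr ≫ cokernel.π d ≫ cokernel.π inr ≫ u = 0 := by
        rw [← Category.assoc, ← hinr, ← Category.assoc, cokernel.condition, zero_comp]
      have h3 : cokernel.π d ≫ cokernel.π inr ≫ u = 0 := by
        apply biprod.hom_ext' <;> simp only [comp_zero]
        · exact hu
        · exact h2
      have h4 : cokernel.π inr ≫ u = 0 := zero_of_epi_comp (cokernel.π d) h3
      exact zero_of_epi_comp (cokernel.π inr) h4
    have he : Epi β := by
      have : Epi (cokernel.π s ≫ β) := by rw [hβπ]; exact hepi0
      exact epi_of_epi (cokernel.π s) β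
    exact hB.of_epi β he hs.2

lemma serreW_ext {X' X Y : A} (f₁ f₂ : X ⟶ Y) (s : X' ⟶ X) (hs : serreW B s)
    (hf : s ≫ f₁ = s ≫ f₂) :
    ∃ (Y' : A) (t : Y ⟶ Y') (_ : serreW B t), f₁ ≫ t = f₂ ≫ t := by
  have hs0 : s ≫ (f₁ - f₂) = 0 := by rw [Preadditive.comp_sub, hf, sub_self]
  set h' : cokernel s ⟶ Y := cokernel.desc s (f₁ - f₂) hs0 with hh'
  have hπ : cokernel.π s ≫ h' = f₁ - f₂ := cokernel.π_desc ..
  refine ⟨cokernel h', cokernel.π h', ⟨?_, bCokernelOfEpi hB _⟩, ?_⟩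
  · exact bImage hB h' hs.2
  · have : (f₁ - f₂) ≫ cokernel.π h' = 0 := by
      rw [← hπ, Category.assoc, cokernel.condition, comp_zero]
    rw [Preadditive.sub_comp] at this
    exact sub_eq_zero.1 this

lemma serreW_mult : (serreW B).IsMultiplicative where
  id_mem X := ⟨bKernelOfMono hB _, bCokernelOfEpi hB _⟩
  comp_mem f g hf hg := serreW_comp hB f g hf hg

lemma serreW_hasLeftCalculusOfFractions : (serreW B).HasLeftCalculusOfFractions := by
  have := serreW_mult hB
  constructor
  · intro X Y φ
    obtain ⟨P, f', s', hs', hsq⟩ := serreW_ore hB φ.s φ.hs φ.f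
    exact ⟨⟨f', s', hs'⟩, hsq⟩
  · intro X' X Y f₁ f₂ s hs hf
    obtain ⟨Y', t, ht, hft⟩ := serreW_ext hB f₁ f₂ s hs hf
    exact ⟨Y', t, ht, hft⟩


omit hB in
lemma π_quotMap {Y : A} {Y₁ Y₂ : Subobject Y} (h : Y₁ ≤ Y₂) :
    cokernel.π Y₁.arrow ≫ quotMap h = cokernel.π Y₂.arrow := cokernel.π_desc ..

lemma quotStep {Y : A} (Y0 : Subobject Y) (hY0 : B (Y0 : A))
    (W0 : Subobject (cokernel Y0.arrow)) (hW0 : B (W0 : A)) :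
    ∃ (Y₃ : Subobject Y) (hle : Y0 ≤ Y₃), B (Y₃ : A) ∧
      ∃ (ψ : cokernel Y₃.arrow ≅ cokernel W0.arrow),
        cokernel.π Y₃.arrow ≫ ψ.hom = cokernel.π Y0.arrow ≫ cokernel.π W0.arrow := by
  set Y₃ : Subobject Y := kernelSubobject (cokernel.π Y0.arrow ≫ cokernel.π W0.arrow) with hY₃
  have harr : Y₃.arrow ≫ cokernel.π Y0.arrow ≫ cokernel.π W0.arrow = 0 := kernelSubobject_arrow_comp (cokernel.π Y0.arrow ≫ cokernel.π W0.arrow)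
  have hle : Y0 ≤ Y₃ := le_kernelSubobject _ _
    (by rw [← Category.assoc, cokernel.condition, zero_comp])
  -- the morphism Y₃ ⟶ W0
  have hc0 : (Y₃.arrow ≫ cokernel.π Y0.arrow) ≫ cokernel.π W0.arrow = 0 := by
    rw [Category.assoc]; exact harr
  set c₃ : (Y₃ : A) ⟶ (W0 : A) := Abelian.monoLift W0.arrow (Y₃.arrow ≫ cokernel.π Y0.arrow) hc0 with hc₃
  have hc₃arr : c₃ ≫ W0.arrow = Y₃.arrow ≫ cokernel.π Y0.arrow := Abelian.monoLift_comp ..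
  -- exactness of the canonical short complex on Y₃
  have hS₃ : (ShortComplex.mk Y₃.arrow (cokernel.π Y0.arrow ≫ cokernel.π W0.arrow) harr).Exact := by
    refine ShortComplex.exact_of_iso (S₁ := ShortComplex.mk
        (kernel.ι (cokernel.π Y0.arrow ≫ cokernel.π W0.arrow))
        (cokernel.π Y0.arrow ≫ cokernel.π W0.arrow) (kernel.condition _))
      (ShortComplex.isoMk (kernelSubobjectIso (cokernel.π Y0.arrow ≫ cokernel.π W0.arrow)).symm
        (Iso.refl _) (Iso.refl _) ?_ ?_)
      (ShortComplex.exact_kernel (cokernel.π Y0.arrow ≫ cokernel.π W0.arrow))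
    · dsimp; rw [Category.comp_id, kernelSubobject_arrow']
    · dsimp; rw [Category.id_comp, Category.comp_id]
  -- epi c₃ via pseudoelements
  have hc₃epi : Epi c₃ := by
    apply epi_of_pseudo_surjective
    intro w
    obtain ⟨y, hy⟩ := pseudo_surjective_of_epi (cokernel.π Y0.arrow) (Abelian.Pseudoelement.pseudoApply W0.arrow w)
    have hy0 : Abelian.Pseudoelement.pseudoApply (cokernel.π Y0.arrow ≫ cokernel.π W0.arrow) y = 0 := by
      rw [Abelian.Pseudoelement.comp_apply, hy, ← Abelian.Pseudoelement.comp_apply,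
        cokernel.condition, Abelian.Pseudoelement.zero_apply]
    obtain ⟨a, ha⟩ := pseudo_exact_of_exact hS₃ y hy0
    refine ⟨a, pseudo_injective_of_mono W0.arrow ?_⟩
    rw [← Abelian.Pseudoelement.comp_apply, hc₃arr, Abelian.Pseudoelement.comp_apply, ha, hy]
  -- exactness of (ofLE, c₃)
  have hzero : Subobject.ofLE Y0 Y₃ hle ≫ c₃ = 0 := by
    rw [← cancel_mono W0.arrow, Category.assoc, hc₃arr, zero_comp, ← Category.assoc,
      Subobject.ofLE_arrow, cokernel.condition]
  have hexact : (ShortComplex.mk (Subobject.ofLE Y0 Y₃ hle) c₃ hzero).Exact := by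
    apply exact_of_pseudo_exact
    intro b hb
    have hb' : Abelian.Pseudoelement.pseudoApply (cokernel.π Y0.arrow)
        (Abelian.Pseudoelement.pseudoApply Y₃.arrow b) = 0 := by
      rw [← Abelian.Pseudoelement.comp_apply, ← hc₃arr, Abelian.Pseudoelement.comp_apply, hb,
        Abelian.Pseudoelement.apply_zero]
    obtain ⟨a, ha⟩ := pseudo_exact_of_exact (ShortComplex.exact_cokernel Y0.arrow) _ hb'
    refine ⟨a, pseudo_injective_of_mono Y₃.arrow ?_⟩
    rw [← Abelian.Pseudoelement.comp_apply, Subobject.ofLE_arrow, ha]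
  have hBY₃ : B (Y₃ : A) :=
    hB.of_extension _ (ShortComplex.ShortExact.mk' hexact inferInstance hc₃epi) hY0 hW0
  -- the isomorphism ψ
  have hψ0 : Y₃.arrow ≫ cokernel.π Y0.arrow ≫ cokernel.π W0.arrow = 0 := harr
  set ψh : cokernel Y₃.arrow ⟶ cokernel W0.arrow := cokernel.desc _ (cokernel.π Y0.arrow ≫ cokernel.π W0.arrow) hψ0 with hψh
  have hψπ : cokernel.π Y₃.arrow ≫ ψh = cokernel.π Y0.arrow ≫ cokernel.π W0.arrow := cokernel.π_desc ..
  have hinv0 : W0.arrow ≫ quotMap hle = 0 := by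
    rw [← cancel_epi c₃, comp_zero, ← Category.assoc, hc₃arr, Category.assoc, π_quotMap,
      cokernel.condition]
  set ψi : cokernel W0.arrow ⟶ cokernel Y₃.arrow := cokernel.desc _ (quotMap hle) hinv0 with hψi
  have hψiπ : cokernel.π W0.arrow ≫ ψi = quotMap hle := cokernel.π_desc ..
  have h1 : ψh ≫ ψi = 𝟙 _ := by
    rw [← cancel_epi (cokernel.π Y₃.arrow), ← Category.assoc, hψπ, Category.assoc, hψiπ,
      π_quotMap, Category.comp_id]
  have h2 : ψi ≫ ψh = 𝟙 _ := by
    rw [← cancel_epi (cokernel.π W0.arrow), ← Category.assoc, hψiπ, Category.comp_id,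
      ← cancel_epi (cokernel.π Y0.arrow), ← Category.assoc, π_quotMap, hψπ]
  exact ⟨Y₃, hle, hBY₃, ⟨ψh, ψi, h1, h2⟩, hψπ⟩

end Frac

open CategoryTheory.Abelian.Pseudoelement
open scoped Pseudoelement

/-- **Statement 10.** Let `A` be an abelian category and `B` a Serre subcategory such that
`(A, B)` satisfies the lifting property, and realize the Gabriel quotient `A/B` as an
abelian category `D` with an exact localization functor `Q : A ⥤ D` at the morphisms with
kernel and cokernel in `B`. Then for all `X, Y` in `A`, the natural map from the direct
limit of `Hom_A(X, Y/Y')` (over subobjects `Y' ⊆ Y` with `Y' ∈ B`) to `Hom_{A/B}(X, Y)` is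
an isomorphism: every `g : Q(X) ⟶ Q(Y)` is of the form `Q(f) ≫ Q(π_{Y'})⁻¹` for some such
`Y'` and `f : X ⟶ Y/Y'`, and two representatives with the same image in `Hom_{A/B}(X,Y)`
become equal in some `Hom_A(X, Y/Y'')` with `Y'' ⊇ Y'₁, Y'₂`, `Y'' ∈ B`. -/
theorem hom_quotient_of_liftingProperty
    (A : Type u) [Category.{v} A] [Abelian A]
    (B : A → Prop) (hB : IsSerreSub B) (hlift : LiftingProperty B)
    (D : Type u₂) [Category.{v₂} D] [Abelian D] (Q : A ⥤ D)
    [Q.IsLocalization (serreW B)]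
    [PreservesFiniteLimits Q] [PreservesFiniteColimits Q] :
    ∀ X Y : A,
      (∀ g : Q.obj X ⟶ Q.obj Y, ∃ Y' : Subobject Y, B (Y' : A) ∧
        ∃ f : X ⟶ cokernel Y'.arrow, Q.map f = g ≫ Q.map (cokernel.π Y'.arrow)) ∧
      (∀ (Y₁ Y₂ : Subobject Y), B (Y₁ : A) → B (Y₂ : A) →
        ∀ (f₁ : X ⟶ cokernel Y₁.arrow) (f₂ : X ⟶ cokernel Y₂.arrow)
          (g : Q.obj X ⟶ Q.obj Y),
          Q.map f₁ = g ≫ Q.map (cokernel.π Y₁.arrow) →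
          Q.map f₂ = g ≫ Q.map (cokernel.π Y₂.arrow) →
          ∃ (Y₃ : Subobject Y) (h₁ : Y₁ ≤ Y₃) (h₂ : Y₂ ≤ Y₃), B (Y₃ : A) ∧
            f₁ ≫ quotMap h₁ = f₂ ≫ quotMap h₂) := by
  haveI hW := serreW_hasLeftCalculusOfFractions hB
  haveI : Q.Additive := Functor.additive_of_preserves_binary_products Q
  intro X Y
  constructor
  · -- surjectivity of the canonical map
    intro g
    obtain ⟨φ, hφ⟩ := Localization.exists_leftFraction Q (serreW B) g
    obtain ⟨Z, f, s, hs, rfl⟩ := φ.cases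
    have hgs : g ≫ Q.map s = Q.map f := by
      rw [hφ]
      exact MorphismProperty.LeftFraction.map_comp_map_s _ Q _
    set Y' : Subobject Y := kernelSubobject s with hY'
    have hBY' : B (Y' : A) := hB.of_iso (kernelSubobjectIso s).symm hs.1
    set i : cokernel Y'.arrow ⟶ Z := cokernel.desc Y'.arrow s (kernelSubobject_arrow_comp s)
      with hi
    have hπi : cokernel.π Y'.arrow ≫ i = s := cokernel.π_desc ..
    have hSY' : (ShortComplex.mk Y'.arrow s (kernelSubobject_arrow_comp s)).Exact := by
      refine ShortComplex.exact_of_iso (S₁ := ShortComplex.mk (kernel.ι s) s (kernel.condition s))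
        (ShortComplex.isoMk (kernelSubobjectIso s).symm (Iso.refl _) (Iso.refl _) ?_ ?_)
        (ShortComplex.exact_kernel s)
      · dsimp; rw [Category.comp_id, kernelSubobject_arrow']
      · dsimp; rw [Category.id_comp, Category.comp_id]
    have hMonoi : Mono i := by
      apply mono_of_zero_of_map_zero
      intro a ha
      obtain ⟨y, hy⟩ := pseudo_surjective_of_epi (cokernel.π Y'.arrow) a
      have hsy : Abelian.Pseudoelement.pseudoApply s y = 0 := by
        rw [← hπi, Abelian.Pseudoelement.comp_apply, hy, ha]
      obtain ⟨a₀, ha₀⟩ := pseudo_exact_of_exact hSY' y hsy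
      rw [← hy, ← ha₀, ← Abelian.Pseudoelement.comp_apply, cokernel.condition,
        Abelian.Pseudoelement.zero_apply]
    haveI := hMonoi
    have hCi : B (cokernel i) :=
      hB.of_iso ((cokernelIsoOfEq hπi).symm ≪≫ cokernelEpiComp (cokernel.π Y'.arrow) i) hs.2
    set c : Z ⟶ cokernel i := cokernel.π i with hc
    set p : kernel (f ≫ c) ⟶ X := kernel.ι (f ≫ c) with hp
    have hBcokp : B (cokernel p) :=
      hB.of_iso (Abelian.coimageIsoImage (f ≫ c)).symm
        (hB.of_mono (kernel.ι (cokernel.π (f ≫ c))) inferInstance hCi)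
    have hWp : serreW B p := ⟨bKernelOfMono hB p, hBcokp⟩
    have hWi : serreW B i := ⟨bKernelOfMono hB i, hCi⟩
    set h : kernel (f ≫ c) ⟶ cokernel Y'.arrow :=
      Abelian.monoLift i (p ≫ f) (by rw [Category.assoc]; exact kernel.condition (f ≫ c))
      with hh0
    have hh : h ≫ i = p ≫ f := Abelian.monoLift_comp ..
    obtain ⟨X', ι, hιmono, hBX', hιe⟩ := hlift (cokernel.π p) inferInstance hBcokp
    haveI := hιmono
    haveI := hιe
    set r : X ⟶ cokernel ι := cokernel.π ι with hr
    have hpr : Epi (p ≫ r) := by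
      apply Preadditive.epi_of_cancel_zero
      intro U u hu
      rw [Category.assoc] at hu
      have hev : cokernel.π p ≫ cokernel.desc p (r ≫ u) hu = r ≫ u := cokernel.π_desc ..
      have h1 : (ι ≫ cokernel.π p) ≫ cokernel.desc p (r ≫ u) hu = 0 := by
        rw [Category.assoc, hev, ← Category.assoc, cokernel.condition, zero_comp]
      have h2 := zero_of_epi_comp (ι ≫ cokernel.π p) h1
      have h3 : r ≫ u = 0 := by rw [← hev, h2, comp_zero]
      exact zero_of_epi_comp r h3
    haveI := hpr
    set k : kernel (p ≫ r) ⟶ kernel (f ≫ c) := kernel.ι (p ≫ r) with hk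
    set m : kernel (p ≫ r) ⟶ X' :=
      Abelian.monoLift ι (k ≫ p) (by rw [Category.assoc]; exact kernel.condition (p ≫ r))
      with hm0
    have hm : m ≫ ι = k ≫ p := Abelian.monoLift_comp ..
    have hBK : B (kernel (p ≫ r)) := by
      haveI h4 : Mono (m ≫ ι) := by rw [hm]; exact mono_comp _ _
      exact hB.of_mono m (mono_of_mono m ι) hBX'
    set W₀ : Subobject (cokernel Y'.arrow) := imageSubobject (k ≫ h) with hW₀
    have hBW₀ : B (W₀ : A) :=
      hB.of_epi (factorThruImageSubobject (k ≫ h)) inferInstance hBK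
    have hfac : factorThruImageSubobject (k ≫ h) ≫ W₀.arrow = k ≫ h :=
      imageSubobject_arrow_comp _
    have hkhq : kernel.ι (p ≫ r) ≫ h ≫ cokernel.π W₀.arrow = 0 := by
      rw [← Category.assoc]
      show (k ≫ h) ≫ cokernel.π W₀.arrow = 0
      rw [← hfac, Category.assoc, cokernel.condition, comp_zero]
    set f'' : cokernel ι ⟶ cokernel W₀.arrow :=
      Abelian.epiDesc (p ≫ r) (h ≫ cokernel.π W₀.arrow) hkhq with hf''
    have hcomp : (p ≫ r) ≫ f'' = h ≫ cokernel.π W₀.arrow := Abelian.comp_epiDesc ..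
    have hpf' : p ≫ (r ≫ f'') = h ≫ cokernel.π W₀.arrow := by
      rw [← Category.assoc]; exact hcomp
    obtain ⟨Y₃, hle, hBY₃, ψ, hψ⟩ := quotStep hB Y' hBY' W₀ hBW₀
    refine ⟨Y₃, hBY₃, (r ≫ f'') ≫ ψ.inv, ?_⟩
    haveI hQi : IsIso (Q.map i) := Localization.inverts Q (serreW B) i hWi
    haveI hQp : IsIso (Q.map p) := Localization.inverts Q (serreW B) p hWp
    have e3 : g ≫ Q.map (cokernel.π Y'.arrow) ≫ Q.map i = Q.map f := by
      rw [← Q.map_comp, hπi]; exact hgs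
    have e4 : Q.map h = Q.map p ≫ g ≫ Q.map (cokernel.π Y'.arrow) := by
      rw [← cancel_mono (Q.map i), ← Q.map_comp, hh, Q.map_comp, Category.assoc,
        Category.assoc, e3]
    have key : Q.map (r ≫ f'') =
        g ≫ Q.map (cokernel.π Y'.arrow) ≫ Q.map (cokernel.π W₀.arrow) := by
      rw [← cancel_epi (Q.map p), ← Q.map_comp, hpf', Q.map_comp, e4]
      simp only [Category.assoc]
    have e5 : Q.map (cokernel.π Y₃.arrow) ≫ Q.map ψ.hom =
        Q.map (cokernel.π Y'.arrow) ≫ Q.map (cokernel.π W₀.arrow) := by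
      rw [← Q.map_comp, hψ, Q.map_comp]
    rw [Q.map_comp, key, ← cancel_mono (Q.map ψ.hom)]
    simp only [Category.assoc]
    rw [← Q.map_comp, ψ.inv_hom_id, Q.map_id, Category.comp_id, e5]
  · -- injectivity of the canonical map
    intro Y₁ Y₂ hBY₁ hBY₂ f₁ f₂ g hf₁ hf₂
    set dd : (Y₁ : A) ⊞ (Y₂ : A) ⟶ Y := biprod.desc Y₁.arrow Y₂.arrow with hdd
    set Y0 : Subobject Y := imageSubobject dd with hY0
    have h₁₀ : Y₁ ≤ Y0 := Subobject.le_of_comm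
      (biprod.inl ≫ factorThruImageSubobject dd)
      (by rw [Category.assoc, imageSubobject_arrow_comp, biprod.inl_desc])
    have h₂₀ : Y₂ ≤ Y0 := Subobject.le_of_comm
      (biprod.inr ≫ factorThruImageSubobject dd)
      (by rw [Category.assoc, imageSubobject_arrow_comp, biprod.inr_desc])
    have hBbi : B ((Y₁ : A) ⊞ (Y₂ : A)) :=
      hB.of_extension _
        ((ShortComplex.Splitting.ofHasBinaryBiproduct (Y₁ : A) (Y₂ : A)).shortExact)
        hBY₁ hBY₂
    have hBY0 : B (Y0 : A) :=
      hB.of_epi (factorThruImageSubobject dd) inferInstance hBbi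
    have hq1 : Q.map (f₁ ≫ quotMap h₁₀) = g ≫ Q.map (cokernel.π Y0.arrow) := by
      rw [Q.map_comp, hf₁, Category.assoc, ← Q.map_comp, π_quotMap]
    have hq2 : Q.map (f₂ ≫ quotMap h₂₀) = g ≫ Q.map (cokernel.π Y0.arrow) := by
      rw [Q.map_comp, hf₂, Category.assoc, ← Q.map_comp, π_quotMap]
    have hd0 : Q.map (f₁ ≫ quotMap h₁₀ - f₂ ≫ quotMap h₂₀) = Q.map 0 := by
      rw [Q.map_sub, hq1, hq2, sub_self, Q.map_zero]
    obtain ⟨Z', t, ht, hdt⟩ :=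
      (MorphismProperty.map_eq_iff_postcomp Q (serreW B) _ _).1 hd0
    rw [zero_comp] at hdt
    have hBW0 : B ((kernelSubobject t : Subobject (cokernel Y0.arrow)) : A) :=
      hB.of_iso (kernelSubobjectIso t).symm ht.1
    have hdq : (f₁ ≫ quotMap h₁₀ - f₂ ≫ quotMap h₂₀) ≫
        cokernel.π (kernelSubobject t).arrow = 0 := by
      rw [← factorThruKernelSubobject_comp_arrow t _ hdt, Category.assoc,
        cokernel.condition, comp_zero]
    obtain ⟨Y₃, hle, hBY₃, ψ, hψ⟩ := quotStep hB Y0 hBY0 (kernelSubobject t) hBW0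
    refine ⟨Y₃, le_trans h₁₀ hle, le_trans h₂₀ hle, hBY₃, ?_⟩
    have key : ∀ (Yi : Subobject Y) (hi : Yi ≤ Y0) (hi3 : Yi ≤ Y₃),
        quotMap hi3 ≫ ψ.hom = quotMap hi ≫ cokernel.π (kernelSubobject t).arrow := by
      intro Yi hi hi3
      rw [← cancel_epi (cokernel.π Yi.arrow), ← Category.assoc, π_quotMap, hψ,
        ← Category.assoc, π_quotMap]
    rw [← cancel_mono ψ.hom, Category.assoc, Category.assoc, key Y₁ h₁₀ _, key Y₂ h₂₀ _,
      ← Category.assoc, ← Category.assoc, ← sub_eq_zero, ← Preadditive.sub_comp]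
    exact hdq


end Paper
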